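/- Fix γ ∈ (0,1) and μ > 0. Let g_0 : ℝ → ℝ ∪ {−∞} be concave, and define recursively for n ≥ 1: p_n(x) = π[ 1 − γ + sup_{y∈ℝ} ( g_{n−1}(y) − min(1,μ)·max(x − y, 0) ) ], s_n = sup{ x ∈ ℝ : p_n(x) ≥ γ }, and g_n(x) = π[ 1 − γ + sup_{y∈ℝ} ( g_{n−1}(y) − |x − y| ) − μ·max(s_n − x, 0) ]. Then for every n ≥ 1, both p_n and g_n are concave. -/

import Mathlib

/-- `π(x) = x` if `x ≥ 0`, and `−∞` otherwise. -/
noncomputable def piE (x : EReal) : EReal := if 0 ≤ x then x else ⊥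

/-- Concavity for `ℝ ∪ {−∞}`-valued functions (modeled as `ℝ → EReal`). -/
def ConcaveE (h : ℝ → EReal) : Prop :=
  ∀ x x' t : ℝ, 0 ≤ t → t ≤ 1 →
    ((t : EReal) * h x + ((1 - t : ℝ) : EReal) * h x') ≤ h (t * x + (1 - t) * x')

/-- `Φ_ξ[g](x) = 1 − γ + sup_y ( g(y) − |x − y| ) − μ·max(ξ − x, 0)`. -/
noncomputable def Phi (γ μ : ℝ) (g : ℝ → EReal) (ξ x : ℝ) : EReal :=
  ((1 - γ : ℝ) : EReal) + (⨆ y : ℝ, g y - ((|x - y| : ℝ) : EReal))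
    - ((μ * max (ξ - x) 0 : ℝ) : EReal)

/-- The phenotypic profile
`p(x) = π[ 1 − γ + sup_y ( g(y) − min(1,μ)·max(x − y, 0) ) ]` built from a
genotypic profile `g`. -/
noncomputable def pFun (γ μ : ℝ) (g : ℝ → EReal) (x : ℝ) : EReal :=
  piE (((1 - γ : ℝ) : EReal) +
    ⨆ y : ℝ, g y - ((min 1 μ * max (x - y) 0 : ℝ) : EReal))

/-- The recursive dynamic: `g_n(x) = π[ Φ_{s_n}[g_{n−1}](x) ]` where
`s_n = sup{ x : p_n(x) ≥ γ }` and `p_n = pFun γ μ g_{n−1}`. -/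
noncomputable def gseq (γ μ : ℝ) (g0 : ℝ → EReal) : ℕ → ℝ → EReal
  | 0 => g0
  | n + 1 =>
      fun x => piE (Phi γ μ (gseq γ μ g0 n)
        (sSup {ξ : ℝ | (γ : EReal) ≤ pFun γ μ (gseq γ μ g0 n) ξ}) x)

/- ### Auxiliary lemmas -/

/-- Multiplying a sup by a positive real, `≤` form. -/
lemma aux_mul_iSup_le {t : ℝ} (ht : 0 < t) (f : ℝ → EReal) {T : EReal}
    (H : ∀ i, (t : EReal) * f i ≤ T) : (t : EReal) * (⨆ i, f i) ≤ T := by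
  have ht' : (0 : EReal) < (t : EReal) := by exact_mod_cast ht
  rw [mul_comm, ← EReal.le_div_iff_mul_le ht' (EReal.coe_ne_top t)]
  refine iSup_le fun i => ?_
  rw [EReal.le_div_iff_mul_le ht' (EReal.coe_ne_top t), mul_comm]
  exact H i

/-- Bounding a convex combination of sups. -/
lemma aux_comb_sup_le {t s : ℝ} (ht : 0 < t) (hs : 0 < s) (f f' : ℝ → EReal) {T : EReal}
    (H : ∀ i j, (t : EReal) * f i + (s : EReal) * f' j ≤ T) :
    (t : EReal) * (⨆ i, f i) + (s : EReal) * (⨆ j, f' j) ≤ T := by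
  refine EReal.add_le_of_forall_lt fun a ha b hb => ?_
  obtain ⟨i, hi⟩ : ∃ i, a < (t : EReal) * f i := by
    by_contra hcon; push_neg at hcon
    exact absurd (aux_mul_iSup_le ht f hcon) (not_le.2 ha)
  obtain ⟨j, hj⟩ : ∃ j, b < (s : EReal) * f' j := by
    by_contra hcon; push_neg at hcon
    exact absurd (aux_mul_iSup_le hs f' hcon) (not_le.2 hb)
  exact ((EReal.add_lt_add hi hj).trans_le (H i j)).le

/-- Distributivity of multiplication by a positive real over `coe + a`. -/
lemma aux_mul_coe_add (t c : ℝ) (ht : 0 < t) (a : EReal) :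
    (t : EReal) * ((c : EReal) + a) = ((t * c : ℝ) : EReal) + (t : EReal) * a := by
  induction a using EReal.rec with
  | bot => rw [EReal.add_bot, EReal.coe_mul_bot_of_pos ht, EReal.add_bot]
  | coe r => norm_cast; ring
  | top =>
      rw [EReal.coe_add_top, EReal.coe_mul_top_of_pos ht, EReal.add_top_of_ne_bot]
      exact EReal.coe_ne_bot _

/-- It suffices to check concavity for strict `t ∈ (0,1)`. -/
lemma aux_concaveE_of_ioo {h : ℝ → EReal}
    (H : ∀ x x' t : ℝ, 0 < t → t < 1 →
      ((t : EReal) * h x + ((1 - t : ℝ) : EReal) * h x') ≤ h (t * x + (1 - t) * x')) :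
    ConcaveE h := by
  intro x x' t ht0 ht1
  rcases eq_or_lt_of_le ht0 with h0 | h0
  · simp [← h0]
  rcases eq_or_lt_of_le ht1 with h1 | h1
  · simp [h1]
  exact H x x' t h0 h1

/-- `piE` preserves concavity. -/
lemma aux_piE_concave {h : ℝ → EReal} (hh : ConcaveE h) :
    ConcaveE (fun x => piE (h x)) := by
  refine aux_concaveE_of_ioo fun x x' t ht0 ht1 => ?_
  have hs0 : (0:ℝ) < 1 - t := by linarith
  simp only [piE]
  by_cases hx : 0 ≤ h x
  · by_cases hx' : 0 ≤ h x'
    · rw [if_pos hx, if_pos hx']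
      have hle := hh x x' t ht0.le ht1.le
      have hnn : (0 : EReal) ≤ (t : EReal) * h x + ((1 - t : ℝ) : EReal) * h x' := by
        have h1 : (0 : EReal) ≤ (t : EReal) * h x :=
          mul_nonneg (by exact_mod_cast ht0.le) hx
        have h2 : (0 : EReal) ≤ ((1 - t : ℝ) : EReal) * h x' :=
          mul_nonneg (by exact_mod_cast hs0.le) hx'
        exact add_nonneg h1 h2
      rw [if_pos (hnn.trans hle)]
      exact hle
    · rw [if_neg hx', EReal.coe_mul_bot_of_pos hs0, EReal.add_bot]
      exact bot_le
  · rw [if_neg hx, EReal.coe_mul_bot_of_pos ht0, EReal.bot_add]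
    exact bot_le

/-- Concavity of `x ↦ c + ⨆ y, g y − k x y` for concave `g` and jointly convex
real kernel `k`. -/
lemma aux_core_concave {g : ℝ → EReal} (hg : ConcaveE g) (c : ℝ) (k : ℝ → ℝ → ℝ)
    (hk : ∀ x y x' y' t : ℝ, 0 < t → t < 1 →
      k (t * x + (1 - t) * x') (t * y + (1 - t) * y')
        ≤ t * k x y + (1 - t) * k x' y') :
    ConcaveE (fun x => ((c : ℝ) : EReal) + ⨆ y : ℝ, g y - ((k x y : ℝ) : EReal)) := by
  refine aux_concaveE_of_ioo fun x x' t ht0 ht1 => ?_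
  have hs0 : (0:ℝ) < 1 - t := by linarith
  -- rewrite each `g y - k` as `(-k) + g y`
  have hrw : ∀ (z : ℝ) (a : EReal), a - ((z : ℝ) : EReal) = ((-z : ℝ) : EReal) + a := by
    intro z a
    rw [sub_eq_add_neg, ← EReal.coe_neg, add_comm]
  rw [aux_mul_coe_add t c ht0, aux_mul_coe_add (1 - t) c hs0, add_add_add_comm,
    ← EReal.coe_add]
  have hcc : (t * c + (1 - t) * c : ℝ) = c := by ring
  rw [hcc]
  refine add_le_add le_rfl ?_
  refine aux_comb_sup_le ht0 hs0 _ _ fun i j => ?_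
  rw [hrw (k x i) (g i), hrw (k x' j) (g j),
    aux_mul_coe_add t _ ht0, aux_mul_coe_add (1 - t) _ hs0, add_add_add_comm, ← EReal.coe_add]
  have hgij := hg i j t ht0.le ht1.le
  have hkij := hk x i x' j t ht0 ht1
  calc ((t * -k x i + (1 - t) * -k x' j : ℝ) : EReal)
        + ((t : EReal) * g i + ((1 - t : ℝ) : EReal) * g j)
      ≤ ((-(k (t * x + (1 - t) * x') (t * i + (1 - t) * j)) : ℝ) : EReal)
        + g (t * i + (1 - t) * j) := by
        refine add_le_add ?_ hgij
        exact_mod_cast (by nlinarith [hkij] : (t * -k x i + (1 - t) * -k x' j : ℝ)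
          ≤ -k (t * x + (1 - t) * x') (t * i + (1 - t) * j))
    _ = g (t * i + (1 - t) * j)
        - ((k (t * x + (1 - t) * x') (t * i + (1 - t) * j) : ℝ) : EReal) := (hrw _ _).symm
    _ ≤ ⨆ y : ℝ, g y - ((k (t * x + (1 - t) * x') y : ℝ) : EReal) :=
        le_iSup (fun y => g y - ((k (t * x + (1 - t) * x') y : ℝ) : EReal)) _

/-- Subtracting a convex real function preserves concavity. -/
lemma aux_sub_convex_concave {h : ℝ → EReal} (hh : ConcaveE h) (m : ℝ → ℝ)
    (hm : ∀ x x' t : ℝ, 0 < t → t < 1 →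
      m (t * x + (1 - t) * x') ≤ t * m x + (1 - t) * m x') :
    ConcaveE (fun x => h x - ((m x : ℝ) : EReal)) := by
  refine aux_concaveE_of_ioo fun x x' t ht0 ht1 => ?_
  have hs0 : (0:ℝ) < 1 - t := by linarith
  have hrw : ∀ (z : ℝ) (a : EReal), a - ((z : ℝ) : EReal) = ((-z : ℝ) : EReal) + a := by
    intro z a
    rw [sub_eq_add_neg, ← EReal.coe_neg, add_comm]
  rw [hrw (m x) (h x), hrw (m x') (h x'),
    hrw (m (t * x + (1 - t) * x')) (h (t * x + (1 - t) * x')),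
    aux_mul_coe_add t _ ht0, aux_mul_coe_add (1 - t) _ hs0, add_add_add_comm, ← EReal.coe_add]
  refine add_le_add ?_ (hh x x' t ht0.le ht1.le)
  have := hm x x' t ht0 ht1
  exact_mod_cast (by nlinarith [this] : (t * -m x + (1 - t) * -m x' : ℝ)
    ≤ -m (t * x + (1 - t) * x'))

/-- Convexity of `z ↦ c₀ * max z 0` composed with affine differences. -/
lemma aux_max_combo {t s a b : ℝ} (ht : 0 ≤ t) (hs : 0 ≤ s) :
    max (t * a + s * b) 0 ≤ t * max a 0 + s * max b 0 := by
  refine max_le ?_ (by positivity)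
  have h1 : t * a ≤ t * max a 0 := mul_le_mul_of_nonneg_left (le_max_left _ _) ht
  have h2 : s * b ≤ s * max b 0 := mul_le_mul_of_nonneg_left (le_max_left _ _) hs
  linarith

/-- Concavity of `pFun` from concavity of `g`. -/
lemma aux_pFun_concave (γ μ : ℝ) (hμ : 0 ≤ μ) {g : ℝ → EReal} (hg : ConcaveE g) :
    ConcaveE (pFun γ μ g) := by
  have := aux_piE_concave (h := fun x => ((1 - γ : ℝ) : EReal) +
      ⨆ y : ℝ, g y - ((min 1 μ * max (x - y) 0 : ℝ) : EReal))
    (aux_core_concave hg (1 - γ) (fun x y => min 1 μ * max (x - y) 0) ?_)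
  · exact this
  · intro x y x' y' t ht0 ht1
    have hc0 : (0:ℝ) ≤ min 1 μ := le_min zero_le_one hμ
    have harg : t * x + (1 - t) * x' - (t * y + (1 - t) * y')
        = t * (x - y) + (1 - t) * (x' - y') := by ring
    rw [harg]
    have := aux_max_combo (a := x - y) (b := x' - y') ht0.le (by linarith : (0:ℝ) ≤ 1 - t)
    nlinarith [this, hc0]

/-- Concavity of `Phi` from concavity of `g`. -/
lemma aux_Phi_concave (γ μ : ℝ) (hμ : 0 ≤ μ) {g : ℝ → EReal} (hg : ConcaveE g) (ξ : ℝ) :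
    ConcaveE (Phi γ μ g ξ) := by
  have hcore := aux_core_concave hg (1 - γ) (fun x y => |x - y|) ?_
  · have := aux_sub_convex_concave hcore (fun x => μ * max (ξ - x) 0) ?_
    · exact this
    · intro x x' t ht0 ht1
      have harg : ξ - (t * x + (1 - t) * x') = t * (ξ - x) + (1 - t) * (ξ - x') := by ring
      rw [harg]
      have := aux_max_combo (a := ξ - x) (b := ξ - x') ht0.le (by linarith : (0:ℝ) ≤ 1 - t)
      nlinarith [this]
  · intro x y x' y' t ht0 ht1
    have harg : t * x + (1 - t) * x' - (t * y + (1 - t) * y')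
        = t * (x - y) + (1 - t) * (x' - y') := by ring
    rw [harg]
    calc |t * (x - y) + (1 - t) * (x' - y')|
        ≤ |t * (x - y)| + |(1 - t) * (x' - y')| := abs_add_le _ _
      _ = t * |x - y| + (1 - t) * |x' - y'| := by
          rw [abs_mul, abs_mul, abs_of_pos ht0, abs_of_pos (by linarith : (0:ℝ) < 1 - t)]

/-- starting from a concave `g₀`, all the profiles `p_n` and `g_n`
(`n ≥ 1`) are concave. -/
theorem pn_gn_concave (γ μ : ℝ) (hγ : γ ∈ Set.Ioo (0 : ℝ) 1) (hμ : 0 < μ)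
    (g0 : ℝ → EReal) (hg0 : ConcaveE g0) :
    ∀ n : ℕ, 1 ≤ n →
      ConcaveE (pFun γ μ (gseq γ μ g0 (n - 1))) ∧ ConcaveE (gseq γ μ g0 n) := by
  have key : ∀ n : ℕ, ConcaveE (gseq γ μ g0 n) := by
    intro n
    induction n with
    | zero => exact hg0
    | succ n ih =>
        show ConcaveE (fun x => piE (Phi γ μ (gseq γ μ g0 n) _ x))
        exact aux_piE_concave (aux_Phi_concave γ μ hμ.le ih _)
  intro n hn
  exact ⟨aux_pFun_concave γ μ hμ.le (key (n - 1)), key n⟩
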